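/- Let Θ ⊆ ℝ^m be an open convex set and ψ : Θ → ℝ a differentiable strictly convex function, and let φ(y) := sup_{θ ∈ Θ} (⟨θ, y⟩ − ψ(θ)) denote its Fenchel–Legendre conjugate. Then for every p ∈ Θ, φ is differentiable at y = ∇ψ(p) with ∇φ(∇ψ(p)) = p. Consequently, fixing θ_q ∈ Θ and defining h(y) := φ(y) + ψ(θ_q) − ⟨θ_q, y⟩ on the image ∇ψ(Θ), one has ∇h(∇ψ(p)) = p − θ_q for every p ∈ Θ; equivalently, θ_q = p − ∇h(∇ψ(p)), so a single gradient step of size 1 in the η-coordinates reaches the point whose θ-coordinate is θ_q. -/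

import Mathlib

open scoped InnerProductSpace

section Aux

variable {m : ℕ}

local notation "E" => EuclideanSpace ℝ (Fin m)

/-- Gradient inequality for a convex function: the function lies above its tangent plane. -/
lemma aux_grad_le {Θ : Set (EuclideanSpace ℝ (Fin m))}
    {ψ : EuclideanSpace ℝ (Fin m) → ℝ} (hψconv : ConvexOn ℝ Θ ψ)
    {p θ g : EuclideanSpace ℝ (Fin m)} (hp : p ∈ Θ) (hθ : θ ∈ Θ)
    (hg : HasGradientAt ψ g p) :
    ⟪g, θ - p⟫_ℝ ≤ ψ θ - ψ p := by
  -- restrict ψ to the segment from p to θ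
  set L : ℝ →ᵃ[ℝ] E := AffineMap.lineMap p θ with hL
  have hLfun : ∀ t : ℝ, L t = p + t • (θ - p) := by
    intro t
    simp [hL, AffineMap.lineMap_apply]
    abel
  have hmem : ∀ t ∈ Set.Icc (0:ℝ) 1, L t ∈ Θ := by
    intro t ht
    have : L t ∈ segment ℝ p θ := by
      rw [segment_eq_image_lineMap]
      exact ⟨t, ht, rfl⟩
    exact (hψconv.1.segment_subset hp hθ) this
  have hconv : ConvexOn ℝ (Set.Icc (0:ℝ) 1) (ψ ∘ L) := by
    refine (hψconv.comp_affineMap L).subset (fun t ht => hmem t ht) (convex_Icc 0 1)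
  -- derivative of ψ ∘ L at 0 equals ⟪g, θ - p⟫
  have hline : HasDerivAt (fun t : ℝ => p + t • (θ - p)) (θ - p) 0 := by
    have h1 : HasDerivAt (fun t : ℝ => t • (θ - p)) ((1:ℝ) • (θ - p)) 0 :=
      (hasDerivAt_id (0:ℝ)).smul_const (θ - p)
    simpa [one_smul] using h1.const_add p
  have hLder : HasDerivAt (fun t : ℝ => (L t : E)) (θ - p) 0 := by
    simpa only [hLfun] using hline
  have hder : HasDerivAt (ψ ∘ L) ⟪g, θ - p⟫_ℝ 0 := by
    have hgf := hg.hasFDerivAt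
    have hL0 : L (0:ℝ) = p := by rw [hLfun]; simp
    have hgf' : HasFDerivAt ψ ((InnerProductSpace.toDual ℝ (EuclideanSpace ℝ (Fin m))) g)
        (L (0:ℝ)) := by rw [hL0]; exact hgf
    have := hgf'.comp_hasDerivAt (0:ℝ) hLder
    simpa [InnerProductSpace.toDual_apply_apply] using this
  have hslope := hconv.le_slope_of_hasDerivAt (Set.left_mem_Icc.mpr zero_le_one)
    (Set.right_mem_Icc.mpr zero_le_one) zero_lt_one hder
  have hL1 : L (1:ℝ) = θ := by rw [hLfun]; simp
  have hL0 : L (0:ℝ) = p := by rw [hLfun]; simp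
  rw [slope_def_field] at hslope
  simpa [hL0, hL1, Function.comp] using hslope

/-- Strict gradient inequality for a strictly convex function. -/
lemma aux_grad_lt {Θ : Set (EuclideanSpace ℝ (Fin m))}
    {ψ : EuclideanSpace ℝ (Fin m) → ℝ} (hψconv : StrictConvexOn ℝ Θ ψ)
    {p θ g : EuclideanSpace ℝ (Fin m)} (hp : p ∈ Θ) (hθ : θ ∈ Θ) (hne : θ ≠ p)
    (hg : HasGradientAt ψ g p) :
    ⟪g, θ - p⟫_ℝ < ψ θ - ψ p := by
  set w : EuclideanSpace ℝ (Fin m) := (2⁻¹ : ℝ) • p + (2⁻¹ : ℝ) • θ with hw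
  have hwΘ : w ∈ Θ := hψconv.1 hp hθ (by norm_num) (by norm_num) (by norm_num)
  have hwlt : ψ w < (2⁻¹ : ℝ) * ψ p + (2⁻¹ : ℝ) * ψ θ := by
    have := hψconv.2 hp hθ (Ne.symm hne) (by norm_num : (0:ℝ) < 2⁻¹)
      (by norm_num : (0:ℝ) < 2⁻¹) (by norm_num)
    simpa [smul_eq_mul] using this
  have hle := aux_grad_le hψconv.convexOn hp hwΘ hg
  have hwp : w - p = (2⁻¹ : ℝ) • (θ - p) := by
    rw [hw]; module
  rw [hwp, real_inner_smul_right] at hle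
  linarith

/-- In a subsingleton space every function has every gradient at every point. -/
lemma aux_hasGradientAt_of_subsingleton {F : Type*} [NormedAddCommGroup F]
    [InnerProductSpace ℝ F] [CompleteSpace F] [Subsingleton F]
    (f : F → ℝ) (g x : F) : HasGradientAt f g x := by
  rw [hasGradientAt_iff_isLittleO]
  have hzero : (fun x' : F => f x' - f x - ⟪g, x' - x⟫_ℝ) = fun _ => (0:ℝ) := by
    funext x'
    rw [Subsingleton.elim x' x]
    simp
  rw [hzero]
  exact Asymptotics.isLittleO_zero _ _

end Aux

/-- Dual form of Theorem 1 / Corollary 1: let `φ` be the Fenchel–Legendre conjugate of a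
differentiable strictly convex function `ψ` on an open convex set `Θ ⊆ ℝ^m`.  Then for
every `p ∈ Θ`, `φ` has gradient `p` at `y = ∇ψ(p)`; consequently, for a fixed `θ_q ∈ Θ`
and `h(y) = φ(y) + ψ(θ_q) − ⟨θ_q, y⟩`, the gradient of `h` at `∇ψ(p)` is `p − θ_q`,
so a single gradient step of size 1 in the η-coordinates reaches the point with
θ-coordinate `θ_q`. -/
theorem legendre_dual_divergence_one_step {m : ℕ}
    (Θ : Set (EuclideanSpace ℝ (Fin m))) (hΘopen : IsOpen Θ) (hΘconv : Convex ℝ Θ)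
    (ψ : EuclideanSpace ℝ (Fin m) → ℝ)
    (hψdiff : DifferentiableOn ℝ ψ Θ) (hψconv : StrictConvexOn ℝ Θ ψ)
    (φ : EuclideanSpace ℝ (Fin m) → ℝ)
    (hφ : ∀ y, φ y = sSup ((fun θ => ⟪θ, y⟫_ℝ - ψ θ) '' Θ))
    (θq : EuclideanSpace ℝ (Fin m)) (hθq : θq ∈ Θ)
    (h : EuclideanSpace ℝ (Fin m) → ℝ)
    (hh : ∀ y, h y = φ y + ψ θq - ⟪θq, y⟫_ℝ) :
    ∀ p ∈ Θ,
      HasGradientAt φ p (gradient ψ p) ∧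
      HasGradientAt h (p - θq) (gradient ψ p) := by
  intro p hp
  rcases subsingleton_or_nontrivial (EuclideanSpace ℝ (Fin m)) with hsub | hnt
  · exact ⟨aux_hasGradientAt_of_subsingleton _ _ _,
      aux_hasGradientAt_of_subsingleton _ _ _⟩
  have hψd : DifferentiableAt ℝ ψ p := hψdiff.differentiableAt (hΘopen.mem_nhds hp)
  set y0 : EuclideanSpace ℝ (Fin m) := gradient ψ p with hy0def
  have hgrad : HasGradientAt ψ y0 p := hψd.hasGradientAt
  -- gradient inequalities
  have hle : ∀ θ ∈ Θ, ⟪y0, θ - p⟫_ℝ ≤ ψ θ - ψ p :=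
    fun θ hθ => aux_grad_le hψconv.convexOn hp hθ hgrad
  have hlt : ∀ θ ∈ Θ, θ ≠ p → ⟪y0, θ - p⟫_ℝ < ψ θ - ψ p :=
    fun θ hθ hne => aux_grad_lt hψconv hp hθ hne hgrad
  -- useful inner product identities
  have id1 : ∀ θ : EuclideanSpace ℝ (Fin m), ⟪y0, θ - p⟫_ℝ = ⟪θ, y0⟫_ℝ - ⟪p, y0⟫_ℝ := by
    intro θ
    rw [inner_sub_right, real_inner_comm y0 θ, real_inner_comm y0 p]
  -- the supremum at y0 is attained at p
  have hbound0 : ∀ a ∈ (fun θ => ⟪θ, y0⟫_ℝ - ψ θ) '' Θ, a ≤ ⟪p, y0⟫_ℝ - ψ p := by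
    rintro a ⟨θ, hθ, rfl⟩
    have h1 := hle θ hθ
    rw [id1 θ] at h1
    show ⟪θ, y0⟫_ℝ - ψ θ ≤ ⟪p, y0⟫_ℝ - ψ p
    linarith
  have hφy0 : φ y0 = ⟪p, y0⟫_ℝ - ψ p := by
    rw [hφ]
    exact le_antisymm (csSup_le ⟨_, ⟨p, hp, rfl⟩⟩ hbound0)
      (le_csSup ⟨_, hbound0⟩ ⟨p, hp, rfl⟩)
  -- an inner radius
  obtain ⟨r₀, hr₀, hball⟩ := Metric.isOpen_iff.mp hΘopen p hp
  set r := r₀ / 2 with hrdef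
  have hr0 : 0 < r := by positivity
  have hrΘ : Metric.closedBall p r ⊆ Θ :=
    (Metric.closedBall_subset_ball (by rw [hrdef]; linarith)).trans hball
  -- key quantitative estimate
  have key : ∀ ε : ℝ, 0 < ε → ε ≤ r → ∃ δ > 0, ∀ v : EuclideanSpace ℝ (Fin m),
      ‖v‖ ≤ δ → |φ (y0 + v) - φ y0 - ⟪p, v⟫_ℝ| ≤ ε * ‖v‖ := by
    intro ε hε hεr
    have hsph : Metric.sphere p ε ⊆ Θ := by
      intro x hx
      apply hrΘ
      rw [Metric.mem_closedBall]
      rw [Metric.mem_sphere] at hx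
      linarith
    have hsne : (Metric.sphere p ε).Nonempty := NormedSpace.sphere_nonempty.mpr hε.le
    have hBcont : ContinuousOn (fun θ => ψ θ - ψ p - ⟪y0, θ - p⟫_ℝ) (Metric.sphere p ε) := by
      apply ContinuousOn.mono _ hsph
      exact (hψdiff.continuousOn.sub continuousOn_const).sub
        ((continuous_const.inner (continuous_id.sub continuous_const)).continuousOn)
    obtain ⟨θ₀, hθ₀mem, hθ₀min⟩ := (isCompact_sphere p ε).exists_isMinOn hsne hBcont
    set c : ℝ := ψ θ₀ - ψ p - ⟪y0, θ₀ - p⟫_ℝ with hcdef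
    have hθ₀ne : θ₀ ≠ p := by
      intro hpp
      rw [Metric.mem_sphere, hpp, dist_self] at hθ₀mem
      exact absurd hθ₀mem.symm (ne_of_gt hε)
    have hcpos : 0 < c := by
      have := hlt θ₀ (hsph hθ₀mem) hθ₀ne
      rw [hcdef]; linarith
    refine ⟨c / ε, div_pos hcpos hε, ?_⟩
    intro v hv
    -- pointwise upper bound over Θ
    have hub : ∀ θ ∈ Θ, ⟪θ, y0 + v⟫_ℝ - ψ θ ≤ (⟪p, y0⟫_ℝ - ψ p) + ⟪p, v⟫_ℝ + ε * ‖v‖ := by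
      intro θ hθ
      have hB : 0 ≤ ψ θ - ψ p - ⟪y0, θ - p⟫_ℝ := by linarith [hle θ hθ]
      have hiv : ⟪θ - p, v⟫_ℝ ≤ ‖θ - p‖ * ‖v‖ := real_inner_le_norm _ _
      have e1 : ⟪θ, y0 + v⟫_ℝ = ⟪θ, y0⟫_ℝ + ⟪θ, v⟫_ℝ := inner_add_right _ _ _
      have id2 : ⟪θ - p, v⟫_ℝ = ⟪θ, v⟫_ℝ - ⟪p, v⟫_ℝ := inner_sub_left _ _ _
      have hid1 := id1 θ
      by_cases hcase : ‖θ - p‖ ≤ ε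
      · have h1 : ⟪θ - p, v⟫_ℝ ≤ ε * ‖v‖ :=
          hiv.trans (mul_le_mul_of_nonneg_right hcase (norm_nonneg v))
        rw [e1]
        linarith [hB, h1, hid1, id2]
      · push_neg at hcase
        set t : ℝ := ‖θ - p‖ with htdef
        have ht : 0 < t := lt_trans hε hcase
        set s : ℝ := ε / t with hsdef
        have hs0 : 0 < s := div_pos hε ht
        have hs1 : s < 1 := (div_lt_one ht).mpr hcase
        set θ' : EuclideanSpace ℝ (Fin m) := p + s • (θ - p) with hθ'def
        have hθ'eq : θ' = (1 - s) • p + s • θ := by rw [hθ'def]; module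
        have hθ'sph : θ' ∈ Metric.sphere p ε := by
          rw [Metric.mem_sphere, dist_eq_norm, hθ'def, add_sub_cancel_left, norm_smul,
            Real.norm_eq_abs, abs_of_pos hs0, hsdef]
          field_simp
          exact htdef.symm
        have hmin : c ≤ ψ θ' - ψ p - ⟪y0, θ' - p⟫_ℝ := hθ₀min hθ'sph
        have hconv' : ψ θ' ≤ (1 - s) * ψ p + s * ψ θ := by
          rw [hθ'eq]
          have := hψconv.convexOn.2 hp hθ (by linarith : (0:ℝ) ≤ 1 - s) hs0.le (by ring)
          simpa [smul_eq_mul] using this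
        have hinner' : ⟪y0, θ' - p⟫_ℝ = s * ⟪y0, θ - p⟫_ℝ := by
          rw [hθ'def, add_sub_cancel_left, real_inner_smul_right]
        -- B θ ≥ c * t / ε
        have hsB : c ≤ s * (ψ θ - ψ p - ⟪y0, θ - p⟫_ℝ) := by
          rw [hinner'] at hmin
          nlinarith [hmin, hconv']
        have hBlarge : c * t / ε ≤ ψ θ - ψ p - ⟪y0, θ - p⟫_ℝ := by
          rw [div_le_iff₀ hε]
          have hst : s * t = ε := by
            rw [hsdef]; field_simp
          have h5 : c * t ≤ s * (ψ θ - ψ p - ⟪y0, θ - p⟫_ℝ) * t :=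
            mul_le_mul_of_nonneg_right hsB ht.le
          have h6 : s * (ψ θ - ψ p - ⟪y0, θ - p⟫_ℝ) * t
              = (ψ θ - ψ p - ⟪y0, θ - p⟫_ℝ) * (s * t) := by ring
          rw [h6, hst] at h5
          exact h5
        -- conclude
        have hfin : ⟪θ - p, v⟫_ℝ - (ψ θ - ψ p - ⟪y0, θ - p⟫_ℝ) ≤ 0 := by
          have h2 : ⟪θ - p, v⟫_ℝ ≤ t * ‖v‖ := hiv
          have h3 : t * ‖v‖ ≤ t * (c / ε) := mul_le_mul_of_nonneg_left hv ht.le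
          have h4 : t * (c / ε) = c * t / ε := by ring
          linarith [hBlarge]
        rw [e1]
        have hεv : 0 ≤ ε * ‖v‖ := mul_nonneg hε.le (norm_nonneg v)
        linarith [hfin, hid1, id2]
    -- from the elementwise bound to bounds on φ
    have hne' : ((fun θ => ⟪θ, y0 + v⟫_ℝ - ψ θ) '' Θ).Nonempty := ⟨_, ⟨p, hp, rfl⟩⟩
    have hub' : ∀ a ∈ (fun θ => ⟪θ, y0 + v⟫_ℝ - ψ θ) '' Θ,
        a ≤ (⟪p, y0⟫_ℝ - ψ p) + ⟪p, v⟫_ℝ + ε * ‖v‖ := by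
      rintro a ⟨θ, hθ, rfl⟩
      show ⟪θ, y0 + v⟫_ℝ - ψ θ ≤ (⟪p, y0⟫_ℝ - ψ p) + ⟪p, v⟫_ℝ + ε * ‖v‖
      exact hub θ hθ
    have hbdd : BddAbove ((fun θ => ⟪θ, y0 + v⟫_ℝ - ψ θ) '' Θ) := ⟨_, hub'⟩
    have hup : φ (y0 + v) ≤ φ y0 + ⟪p, v⟫_ℝ + ε * ‖v‖ := by
      rw [hφ, hφy0]
      exact csSup_le hne' hub'
    have hlo : φ y0 + ⟪p, v⟫_ℝ ≤ φ (y0 + v) := by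
      rw [hφ (y0 + v), hφy0]
      have hmem : ⟪p, y0 + v⟫_ℝ - ψ p ∈ (fun θ => ⟪θ, y0 + v⟫_ℝ - ψ θ) '' Θ := ⟨p, hp, rfl⟩
      have := le_csSup hbdd hmem
      have hpadd : ⟪p, y0 + v⟫_ℝ = ⟪p, y0⟫_ℝ + ⟪p, v⟫_ℝ := inner_add_right _ _ _
      linarith
    rw [abs_le]
    constructor
    · have hεv : 0 ≤ ε * ‖v‖ := mul_nonneg hε.le (norm_nonneg v)
      linarith
    · linarith
  -- HasGradientAt φ p y0
  have hφgrad : HasGradientAt φ p y0 := by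
    rw [hasGradientAt_iff_isLittleO, Asymptotics.isLittleO_iff]
    intro C hC
    obtain ⟨δ, hδ, hkey⟩ := key (min C r) (lt_min hC hr0) (min_le_right _ _)
    have hmem : Metric.ball y0 δ ∈ nhds y0 := Metric.ball_mem_nhds y0 hδ
    filter_upwards [hmem] with x' hx'
    have hx'' : ‖x' - y0‖ ≤ δ := by
      rw [Metric.mem_ball, dist_eq_norm] at hx'
      exact hx'.le
    have hk := hkey (x' - y0) hx''
    rw [add_sub_cancel] at hk
    have h1 : ‖φ x' - φ y0 - ⟪p, x' - y0⟫_ℝ‖ ≤ min C r * ‖x' - y0‖ := by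
      rw [Real.norm_eq_abs]; exact hk
    calc ‖φ x' - φ y0 - ⟪p, x' - y0⟫_ℝ‖ ≤ min C r * ‖x' - y0‖ := h1
      _ ≤ C * ‖x' - y0‖ :=
        mul_le_mul_of_nonneg_right (min_le_left _ _) (norm_nonneg _)
  refine ⟨hφgrad, ?_⟩
  have hφo := hasGradientAt_iff_isLittleO.mp hφgrad
  rw [hasGradientAt_iff_isLittleO]
  have heq : (fun x' => h x' - h y0 - ⟪p - θq, x' - y0⟫_ℝ)
      = fun x' => φ x' - φ y0 - ⟪p, x' - y0⟫_ℝ := by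
    funext x'
    rw [hh x', hh y0, inner_sub_left, inner_sub_right θq x' y0]
    ring
  rw [heq]
  exact hφo
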